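/- arXiv:1904.12009 — 2 statements merged into one kernel-verified Lean document; each statement's English description precedes it below -/
import Mathlib

section
/- Let T₁, …, T_R be independent nonnegative random variables, let ε ∈ (0,1), p > 0, and suppose R > p/ε and E[T_i^ε] ≤ M for all i with M ≥ 1. Then E[min{T₁,…,T_R}^p] ≤ 1 + (p/(Rε − p)) · M^R. -/
open MeasureTheory ProbabilityTheory Set

/-- If `T₁,…,T_R` are independent nonnegative random variables with
`E[T_i^ε] ≤ M`, `M ≥ 1`, `ε ∈ (0,1)`, `p > 0` and `Rε > p`, then
`E[minated_i T_i ^ p] ≤ 1 + (p/(Rε−p))·M^R`. -/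
theorem stmt_9
    {Ω : Type*} [MeasurableSpace Ω] (P : Measure Ω) [IsProbabilityMeasure P]
    (R : ℕ) (hR : 0 < R) (T : Fin R → Ω → ℝ)
    (hmeas : ∀ i, Measurable (T i)) (hnonneg : ∀ i a, 0 ≤ T i a)
    (hind : iIndepFun T P)
    (ε : ℝ) (hε : ε ∈ Set.Ioo (0:ℝ) 1) (p : ℝ) (hp : 0 < p)
    (hRp : p / ε < R)
    (M : ℝ) (hM : 1 ≤ M)
    (hmom : ∀ i, ∫⁻ a, ENNReal.ofReal (T i a ^ ε) ∂P ≤ ENNReal.ofReal M) :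
    ∫⁻ a, ENNReal.ofReal ((⨅ i, T i a) ^ p) ∂P ≤
      ENNReal.ofReal (1 + (p / (R * ε - p)) * M ^ R) := by
  obtain ⟨hε0, hε1⟩ := hε
  have hpR : p < R * ε := by
    rw [div_lt_iff₀ hε0] at hRp; linarith
  have hd : (0:ℝ) < R * ε - p := by linarith
  haveI : Nonempty (Fin R) := ⟨⟨0, hR⟩⟩
  set Y : Ω → ℝ := fun a => ⨅ i, T i a with hY
  have hYmeas : Measurable Y := Measurable.iInf (fun i => hmeas i)
  have hYnn : ∀ a, 0 ≤ Y a := fun a => le_ciInf (fun i => hnonneg i a)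
  have hM0 : (0:ℝ) < M := lt_of_lt_of_le one_pos hM
  -- layer cake
  rw [lintegral_rpow_eq_lintegral_meas_le_mul P (Filter.Eventually.of_forall hYnn)
    hYmeas.aemeasurable hp]
  -- tail bound on Ioi 1
  have tail : ∀ t : ℝ, 1 ≤ t →
      P {a | t ≤ Y a} ≤ ENNReal.ofReal (M ^ R * t ^ (-(R * ε))) := by
    intro t ht
    have ht0 : (0:ℝ) < t := lt_of_lt_of_le one_pos ht
    have hsub : {a | t ≤ Y a} ⊆ ⋂ i, T i ⁻¹' Ici t := by
      intro a ha
      simp only [mem_iInter, mem_preimage, mem_Ici]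
      intro i
      exact le_trans ha (ciInf_le (Finite.bddBelow (finite_range _)) i)
    calc P {a | t ≤ Y a} ≤ P (⋂ i, T i ⁻¹' Ici t) := measure_mono hsub
      _ = ∏ i, P (T i ⁻¹' Ici t) :=
          hind.meas_iInter (fun i => ⟨Ici t, measurableSet_Ici, rfl⟩)
      _ ≤ ∏ _i : Fin R, ENNReal.ofReal (M * t ^ (-ε)) := by
          apply Finset.prod_le_prod' 
          intro i _
          have hsub2 : T i ⁻¹' Ici t ⊆ {a | ENNReal.ofReal (t ^ ε) ≤ ENNReal.ofReal (T i a ^ ε)} := by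
            intro a ha
            simp only [mem_preimage, mem_Ici] at ha
            exact ENNReal.ofReal_le_ofReal (Real.rpow_le_rpow ht0.le ha hε0.le)
          have htε : (0:ℝ) < t ^ ε := Real.rpow_pos_of_pos ht0 ε
          calc P (T i ⁻¹' Ici t) ≤ P {a | ENNReal.ofReal (t ^ ε) ≤ ENNReal.ofReal (T i a ^ ε)} :=
                measure_mono hsub2
            _ ≤ (∫⁻ a, ENNReal.ofReal (T i a ^ ε) ∂P) / ENNReal.ofReal (t ^ ε) :=
                meas_ge_le_lintegral_div
                  ((((Real.continuous_rpow_const hε0.le).measurable.comp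
                    (hmeas i)).ennreal_ofReal).aemeasurable)
                  (ENNReal.ofReal_pos.mpr htε).ne' ENNReal.ofReal_ne_top
            _ ≤ ENNReal.ofReal M / ENNReal.ofReal (t ^ ε) := by
                gcongr; exact hmom i
            _ = ENNReal.ofReal (M * t ^ (-ε)) := by
                rw [← ENNReal.ofReal_div_of_pos htε, Real.rpow_neg ht0.le, div_eq_mul_inv]
      _ = ENNReal.ofReal (M * t ^ (-ε)) ^ R := by simp
      _ = ENNReal.ofReal ((M * t ^ (-ε)) ^ R) := by
          rw [← ENNReal.ofReal_pow]
          positivity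
      _ = ENNReal.ofReal (M ^ R * t ^ (-(R * ε))) := by
          congr 1
          rw [mul_pow, ← Real.rpow_natCast (t ^ (-ε)) R, ← Real.rpow_mul ht0.le]
          ring_nf
  -- split the integral
  have hsplit : (Ioi (0:ℝ)) = Ioc 0 1 ∪ Ioi 1 := (Ioc_union_Ioi_eq_Ioi zero_le_one).symm
  rw [hsplit, lintegral_union measurableSet_Ioi (Ioc_disjoint_Ioi le_rfl)]
  -- part A
  have partA : ∫⁻ t in Ioc (0:ℝ) 1, P {a | t ≤ Y a} * ENNReal.ofReal (t ^ (p - 1)) ≤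
      ENNReal.ofReal (1 / p) := by
    have h1 : ∫⁻ t in Ioc (0:ℝ) 1, P {a | t ≤ Y a} * ENNReal.ofReal (t ^ (p - 1)) ≤
        ∫⁻ t in Ioc (0:ℝ) 1, ENNReal.ofReal (t ^ (p - 1)) := by
      apply lintegral_mono
      intro t
      calc P {a | t ≤ Y a} * ENNReal.ofReal (t ^ (p - 1)) ≤
          1 * ENNReal.ofReal (t ^ (p - 1)) := by gcongr; exact prob_le_one
        _ = ENNReal.ofReal (t ^ (p - 1)) := one_mul _
    refine h1.trans ?_
    have hint : IntegrableOn (fun t : ℝ => t ^ (p - 1)) (Ioc (0:ℝ) 1) := by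
      have := intervalIntegral.intervalIntegrable_rpow' (r := p - 1) (a := 0) (b := 1)
        (by linarith)
      rw [intervalIntegrable_iff, uIoc_of_le zero_le_one] at this
      exact this
    rw [← ofReal_integral_eq_lintegral_ofReal hint]
    · apply ENNReal.ofReal_le_ofReal
      have : ∫ t in Ioc (0:ℝ) 1, t ^ (p - 1) = ∫ t in (0:ℝ)..1, t ^ (p - 1) := by
        rw [intervalIntegral.integral_of_le zero_le_one]
      rw [this, integral_rpow (Or.inl (by linarith : (-1:ℝ) < p - 1))]
      rw [Real.one_rpow, Real.zero_rpow (by linarith : p - 1 + 1 ≠ 0)]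
      simp [sub_add_cancel]
    · filter_upwards [ae_restrict_mem measurableSet_Ioc] with t ht
      exact Real.rpow_nonneg ht.1.le _
  -- part B
  have partB : ∫⁻ t in Ioi (1:ℝ), P {a | t ≤ Y a} * ENNReal.ofReal (t ^ (p - 1)) ≤
      ENNReal.ofReal (M ^ R * (1 / (R * ε - p))) := by
    have h1 : ∫⁻ t in Ioi (1:ℝ), P {a | t ≤ Y a} * ENNReal.ofReal (t ^ (p - 1)) ≤
        ∫⁻ t in Ioi (1:ℝ), ENNReal.ofReal (M ^ R * t ^ (p - 1 - R * ε)) := by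
      apply setLIntegral_mono' measurableSet_Ioi
      intro t ht
      have ht1 : (1:ℝ) ≤ t := le_of_lt ht
      have ht0 : (0:ℝ) < t := lt_of_lt_of_le one_pos ht1
      calc P {a | t ≤ Y a} * ENNReal.ofReal (t ^ (p - 1)) ≤
          ENNReal.ofReal (M ^ R * t ^ (-(R * ε))) * ENNReal.ofReal (t ^ (p - 1)) := by
            gcongr; exact tail t ht1
        _ = ENNReal.ofReal (M ^ R * t ^ (p - 1 - R * ε)) := by
            rw [← ENNReal.ofReal_mul (by positivity)]
            congr 1
            rw [mul_assoc, ← Real.rpow_add ht0]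
            ring_nf
    refine h1.trans ?_
    have hlt : p - 1 - R * ε < -1 := by linarith
    have hint : IntegrableOn (fun t : ℝ => M ^ R * t ^ (p - 1 - R * ε)) (Ioi (1:ℝ)) :=
      (integrableOn_Ioi_rpow_of_lt hlt one_pos).const_mul _
    rw [← ofReal_integral_eq_lintegral_ofReal hint]
    · apply ENNReal.ofReal_le_ofReal
      rw [integral_const_mul, integral_Ioi_rpow_of_lt hlt one_pos]
      apply le_of_eq
      rw [Real.one_rpow]
      have h1 : p - 1 - (R:ℝ) * ε + 1 ≠ 0 := by intro h; nlinarith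
      have h2 : (R:ℝ) * ε - p ≠ 0 := by intro h; nlinarith
      field_simp
      ring
    · filter_upwards [ae_restrict_mem measurableSet_Ioi] with t ht
      have : (0:ℝ) < t := lt_trans one_pos ht
      positivity
  calc ENNReal.ofReal p *
      ((∫⁻ t in Ioc (0:ℝ) 1, P {a | t ≤ Y a} * ENNReal.ofReal (t ^ (p - 1))) +
        ∫⁻ t in Ioi (1:ℝ), P {a | t ≤ Y a} * ENNReal.ofReal (t ^ (p - 1))) ≤
      ENNReal.ofReal p * (ENNReal.ofReal (1 / p) + ENNReal.ofReal (M ^ R * (1 / (R * ε - p)))) := by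
        gcongr
    _ = ENNReal.ofReal (1 + (p / (R * ε - p)) * M ^ R) := by
        rw [← ENNReal.ofReal_add (by positivity)
            (mul_nonneg (by positivity) (one_div_nonneg.mpr hd.le)),
          ← ENNReal.ofReal_mul hp.le]
        congr 1
        field_simp
end

section
/- Let T be a nonnegative random variable, let N be a nonnegative-integer-valued random variable, and suppose that conditioned on {N = n}, T is stochastically dominated by t₁ + ⋯ + t_n where t₁, t₂, … are i.i.d. nonnegative random variables independent of N. If ε ∈ (0,1), K ≥ 1, and P(N ≥ jK) ≤ C e^{−c j} for all j ≥ 1 with constants C, c > 0, then E[T^ε] ≤ K·E[t₁^ε]·(1 + Σ_{j=1}^∞ (j+1)·C e^{−c j}), which is finite. -/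
open MeasureTheory Finset
open scoped ENNReal NNReal

private lemma aux_rpow_add_le {ε : ℝ} (hε0 : 0 ≤ ε) (hε1 : ε ≤ 1) {a b : ℝ}
    (ha : 0 ≤ a) (hb : 0 ≤ b) : (a + b) ^ ε ≤ a ^ ε + b ^ ε := by
  have h := NNReal.rpow_add_le_add_rpow a.toNNReal b.toNNReal hε0 hε1
  have h2 := NNReal.coe_le_coe.2 h
  rw [NNReal.coe_rpow, NNReal.coe_add, NNReal.coe_add, NNReal.coe_rpow, NNReal.coe_rpow,
    Real.coe_toNNReal a ha, Real.coe_toNNReal b hb] at h2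
  exact h2

private lemma aux_rpow_sum_le {ε : ℝ} (hε0 : 0 < ε) (hε1 : ε ≤ 1) {ι : Type*} (s : Finset ι)
    (x : ι → ℝ) (hx : ∀ i, 0 ≤ x i) : (∑ i ∈ s, x i) ^ ε ≤ ∑ i ∈ s, x i ^ ε := by
  induction s using Finset.cons_induction with
  | empty => simp [Real.zero_rpow hε0.ne']
  | cons a s ha ih =>
    rw [Finset.sum_cons, Finset.sum_cons]
    calc (x a + ∑ i ∈ s, x i) ^ ε ≤ x a ^ ε + (∑ i ∈ s, x i) ^ ε :=
          aux_rpow_add_le hε0.le hε1 (hx a) (Finset.sum_nonneg fun i _ => hx i)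
      _ ≤ x a ^ ε + ∑ i ∈ s, x i ^ ε := by gcongr

private lemma aux_lt_rpow_iff {ε : ℝ} (hε : 0 < ε) {y x : ℝ} (hy : 0 < y) (hx : 0 ≤ x) :
    y < x ^ ε ↔ y ^ (1/ε) < x := by
  constructor
  · intro h
    have h2 := Real.rpow_lt_rpow hy.le h (one_div_pos.2 hε)
    rwa [← Real.rpow_mul hx, mul_one_div_cancel hε.ne', Real.rpow_one] at h2
  · intro h
    have h2 := Real.rpow_lt_rpow (Real.rpow_nonneg hy.le _) h hε
    rwa [← Real.rpow_mul hy.le, one_div_mul_cancel hε.ne', Real.rpow_one] at h2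

/-- If, conditioned on `{N = n}`, `T` is stochastically dominated by a sum of `n`
i.i.d. nonnegative weights `t_i`, and `P(N ≥ jK) ≤ C e^{−cj}`, then
`E[T^ε] ≤ K·E[t₁^ε]·(1 + Σ_{j≥1} (j+1)·C e^{−cj}) < ∞`. -/
theorem stmt_10
    {Ω Ω' : Type*} [MeasurableSpace Ω] [MeasurableSpace Ω']
    (P : Measure Ω) (P' : Measure Ω')
    [IsProbabilityMeasure P] [IsProbabilityMeasure P']
    (T : Ω → ℝ) (hT : Measurable T) (hTnn : ∀ a, 0 ≤ T a)
    (N : Ω → ℕ) (hN : Measurable N)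
    (t : ℕ → Ω' → ℝ) (htmeas : ∀ i, Measurable (t i)) (htnn : ∀ i b, 0 ≤ t i b)
    (hiid : ∀ i y, P' {b | t i b ≤ y} = P' {b | t 0 b ≤ y})
    (hdom : ∀ n : ℕ, ∀ y : ℝ,
      P ({a | y < T a} ∩ {a | N a = n}) ≤
        P {a | N a = n} * P' {b | y < ∑ i ∈ Finset.range n, t i b})
    (ε : ℝ) (hε : ε ∈ Set.Ioo (0:ℝ) 1)
    (Et : ℝ) (hEt : ∫⁻ b, ENNReal.ofReal (t 0 b ^ ε) ∂P' = ENNReal.ofReal Et)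
    (K : ℝ) (hK : 1 ≤ K) (C c : ℝ) (hC : 0 < C) (hc : 0 < c)
    (htail : ∀ j : ℕ, 1 ≤ j →
      P {a | (j : ℝ) * K ≤ (N a : ℝ)} ≤ ENNReal.ofReal (C * Real.exp (-c * j))) :
    ∫⁻ a, ENNReal.ofReal (T a ^ ε) ∂P ≤
      ENNReal.ofReal (K * Et * (1 + ∑' j : ℕ, ((j:ℝ) + 2) * (C * Real.exp (-c * ((j:ℝ) + 1))))) := by
  classical
  obtain ⟨hε0, hε1⟩ := hε
  set S : ℝ := ∑' j : ℕ, ((j:ℝ) + 2) * (C * Real.exp (-c * ((j:ℝ) + 1))) with hS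
  set En : ℕ → Set Ω := fun n => {a | N a = n} with hEn
  have hEnm : ∀ n, MeasurableSet (En n) := fun n => hN (measurableSet_singleton n)
  have hEnd : Pairwise (Function.onFun Disjoint En) := by
    intro m n hmn
    simp only [Function.onFun, Set.disjoint_left, hEn]
    rintro a (ha : N a = m) (hb : N a = n)
    exact hmn (ha ▸ hb ▸ rfl)
  have hU : (⋃ n, En n) = Set.univ := by
    ext a; simp [hEn]
  -- measurability of rpow
  have hrc : Measurable fun x : ℝ => x ^ ε := (Real.continuous_rpow_const hε0.le).measurable
  have hTε : Measurable fun a => T a ^ ε := hrc.comp hT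
  -- the summands t i have the same E[t^ε]
  have htiε : ∀ i, ∫⁻ b, ENNReal.ofReal (t i b ^ ε) ∂P' = ENNReal.ofReal Et := by
    intro i
    have hmi : Measurable fun b => t i b ^ ε := hrc.comp (htmeas i)
    have hm0 : Measurable fun b => t 0 b ^ ε := hrc.comp (htmeas 0)
    rw [lintegral_eq_lintegral_meas_lt P' (Filter.Eventually.of_forall fun b =>
      Real.rpow_nonneg (htnn i b) ε) hmi.aemeasurable]
    rw [← hEt, lintegral_eq_lintegral_meas_lt P' (Filter.Eventually.of_forall fun b =>
      Real.rpow_nonneg (htnn 0 b) ε) hm0.aemeasurable]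
    refine setLIntegral_congr_fun measurableSet_Ioi (fun y hy => ?_)
    have e1 : {b | y < t i b ^ ε} = {b | y ^ (1/ε) < t i b} := by
      ext b; exact aux_lt_rpow_iff hε0 hy (htnn i b)
    have e2 : {b | y < t 0 b ^ ε} = {b | y ^ (1/ε) < t 0 b} := by
      ext b; exact aux_lt_rpow_iff hε0 hy (htnn 0 b)
    rw [e1, e2]
    have hcompl : ∀ k : ℕ, {b | y ^ (1/ε) < t k b} = {b | t k b ≤ y ^ (1/ε)}ᶜ := by
      intro k; ext b; simp [not_le]
    rw [hcompl i, hcompl 0,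
      measure_compl (measurableSet_le (htmeas i) measurable_const) (measure_ne_top _ _),
      measure_compl (measurableSet_le (htmeas 0) measurable_const) (measure_ne_top _ _),
      hiid i (y ^ (1/ε))]
  -- per-n bound via layer cake and subadditivity
  have key : ∀ n : ℕ, ∫⁻ a in En n, ENNReal.ofReal (T a ^ ε) ∂P ≤
      P (En n) * ((n : ℝ≥0∞) * ENNReal.ofReal Et) := by
    intro n
    set Sn : Ω' → ℝ := fun b => ∑ i ∈ Finset.range n, t i b with hSn
    have hSnm : Measurable Sn := Finset.measurable_sum _ fun i _ => htmeas i
    have hSnnn : ∀ b, 0 ≤ Sn b := fun b => Finset.sum_nonneg fun i _ => htnn i b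
    have hSnε : Measurable fun b => Sn b ^ ε := hrc.comp hSnm
    have step1 : ∫⁻ a in En n, ENNReal.ofReal (T a ^ ε) ∂P =
        ∫⁻ y in Set.Ioi (0:ℝ), P ({a | y < T a ^ ε} ∩ En n) := by
      rw [lintegral_eq_lintegral_meas_lt (P.restrict (En n))
        (Filter.Eventually.of_forall fun a => Real.rpow_nonneg (hTnn a) ε) hTε.aemeasurable]
      refine lintegral_congr fun y => ?_
      exact Measure.restrict_apply (measurableSet_lt measurable_const hTε)
    have step2 : ∫⁻ y in Set.Ioi (0:ℝ), P ({a | y < T a ^ ε} ∩ En n) ≤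
        ∫⁻ y in Set.Ioi (0:ℝ), P (En n) * P' {b | y < Sn b ^ ε} := by
      refine lintegral_mono_ae (ae_restrict_of_forall_mem measurableSet_Ioi fun y hy => ?_)
      have hy0 : (0:ℝ) < y := hy
      have e1 : {a | y < T a ^ ε} = {a | y ^ (1/ε) < T a} := by
        ext a; exact aux_lt_rpow_iff hε0 hy0 (hTnn a)
      have e2 : {b | y ^ (1/ε) < Sn b} = {b | y < Sn b ^ ε} := by
        ext b; exact (aux_lt_rpow_iff hε0 hy0 (hSnnn b)).symm
      rw [e1, ← e2]
      exact hdom n (y ^ (1/ε))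
    have step3 : ∫⁻ y in Set.Ioi (0:ℝ), P (En n) * P' {b | y < Sn b ^ ε} =
        P (En n) * ∫⁻ y in Set.Ioi (0:ℝ), P' {b | y < Sn b ^ ε} :=
      lintegral_const_mul' _ _ (measure_ne_top _ _)
    have step4 : ∫⁻ y in Set.Ioi (0:ℝ), P' {b | y < Sn b ^ ε} =
        ∫⁻ b, ENNReal.ofReal (Sn b ^ ε) ∂P' :=
      (lintegral_eq_lintegral_meas_lt P'
        (Filter.Eventually.of_forall fun b => Real.rpow_nonneg (hSnnn b) ε)
        hSnε.aemeasurable).symm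
    have step5 : ∫⁻ b, ENNReal.ofReal (Sn b ^ ε) ∂P' ≤ (n : ℝ≥0∞) * ENNReal.ofReal Et := by
      calc ∫⁻ b, ENNReal.ofReal (Sn b ^ ε) ∂P'
          ≤ ∫⁻ b, ∑ i ∈ Finset.range n, ENNReal.ofReal (t i b ^ ε) ∂P' := by
            refine lintegral_mono fun b => ?_
            rw [← ENNReal.ofReal_sum_of_nonneg fun i _ => Real.rpow_nonneg (htnn i b) ε]
            exact ENNReal.ofReal_le_ofReal
              (aux_rpow_sum_le hε0 hε1.le _ _ fun i => htnn i b)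
        _ = ∑ i ∈ Finset.range n, ∫⁻ b, ENNReal.ofReal (t i b ^ ε) ∂P' :=
            lintegral_finset_sum _ fun i _ =>
              ((hrc.comp (htmeas i)).ennreal_ofReal)
        _ = (n : ℝ≥0∞) * ENNReal.ofReal Et := by
            simp [htiε]
    calc ∫⁻ a in En n, ENNReal.ofReal (T a ^ ε) ∂P
        = ∫⁻ y in Set.Ioi (0:ℝ), P ({a | y < T a ^ ε} ∩ En n) := step1
      _ ≤ ∫⁻ y in Set.Ioi (0:ℝ), P (En n) * P' {b | y < Sn b ^ ε} := step2
      _ = P (En n) * ∫⁻ y in Set.Ioi (0:ℝ), P' {b | y < Sn b ^ ε} := step3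
      _ = P (En n) * ∫⁻ b, ENNReal.ofReal (Sn b ^ ε) ∂P' := by rw [step4]
      _ ≤ P (En n) * ((n : ℝ≥0∞) * ENNReal.ofReal Et) := mul_le_mul_right step5 _
  -- decomposition of measures of half-lines over the partition
  have hmeasPart : ∀ r : ℝ, P {a | r ≤ (N a : ℝ)} =
      ∑' n : ℕ, (if r ≤ (n:ℝ) then P (En n) else 0) := by
    intro r
    set s : ℕ → Set Ω := fun n => if r ≤ (n:ℝ) then En n else ∅ with hs
    have hsub : ∀ n, s n ⊆ En n := by
      intro n
      by_cases h : r ≤ (n:ℝ) <;> simp [hs, h]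
    have hsm : ∀ n, MeasurableSet (s n) := by
      intro n
      by_cases h : r ≤ (n:ℝ) <;> simp [hs, h, hEnm n]
    have hsd : Pairwise (Function.onFun Disjoint s) := fun m n hmn =>
      (hEnd hmn).mono (hsub m) (hsub n)
    have hUs : (⋃ n, s n) = {a | r ≤ (N a : ℝ)} := by
      ext a
      simp only [Set.mem_iUnion, Set.mem_setOf_eq, hs]
      constructor
      · rintro ⟨n, hn⟩
        split_ifs at hn with h
        · exact hn ▸ h
        · exact absurd hn (Set.notMem_empty a)
      · intro h
        exact ⟨N a, by rw [if_pos h]; exact rfl⟩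
    rw [← hUs, measure_iUnion hsd hsm]
    refine tsum_congr fun n => ?_
    by_cases h : r ≤ (n:ℝ) <;> simp [hs, h]
  have hsum1 : ∑' n : ℕ, P (En n) = 1 := by
    rw [← measure_iUnion hEnd hEnm, hU, measure_univ]
  -- summability of the series
  have hterm_nn : ∀ j : ℕ, 0 ≤ ((j:ℝ) + 2) * (C * Real.exp (-c * ((j:ℝ) + 1))) := by
    intro j; positivity
  have hr1 : Real.exp (-c) < 1 := by
    rw [Real.exp_lt_one_iff]; linarith
  have hr0 : (0:ℝ) ≤ Real.exp (-c) := (Real.exp_pos _).le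
  have hsummable : Summable fun j : ℕ => ((j:ℝ) + 2) * (C * Real.exp (-c * ((j:ℝ) + 1))) := by
    have h1 : Summable fun j : ℕ => (j:ℝ) * Real.exp (-c) ^ j := by
      have := summable_pow_mul_geometric_of_norm_lt_one 1
        (r := Real.exp (-c)) (by rwa [Real.norm_eq_abs, abs_of_nonneg hr0])
      simpa using this
    have h2 : Summable fun j : ℕ => (2:ℝ) * Real.exp (-c) ^ j :=
      (summable_geometric_of_lt_one hr0 hr1).mul_left 2
    have h3 : Summable fun j : ℕ => ((j:ℝ) + 2) * Real.exp (-c) ^ j := by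
      have := h1.add h2
      refine this.congr fun j => ?_
      ring
    have h4 := h3.mul_right (C * Real.exp (-c))
    refine h4.congr fun j => ?_
    have : Real.exp (-c * ((j:ℝ) + 1)) = Real.exp (-c) ^ j * Real.exp (-c) := by
      rw [← Real.exp_nat_mul, ← Real.exp_add]
      ring_nf
    rw [this]; ring
  have hSnn : 0 ≤ S := tsum_nonneg hterm_nn
  -- tail bound with shifted index
  have htail' : ∀ j : ℕ, P {a | ((j:ℝ) + 1) * K ≤ (N a : ℝ)} ≤
      ENNReal.ofReal (C * Real.exp (-c * ((j:ℝ) + 1))) := by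
    intro j
    have := htail (j + 1) (by omega)
    have hcast : ((j + 1 : ℕ) : ℝ) = (j:ℝ) + 1 := by push_cast; ring
    rwa [hcast] at this
  -- pointwise bound n ≤ K (1 + Σ_j (j+2) 1_{(j+1)K ≤ n})
  have claim1 : ∀ n : ℕ, (n : ℝ≥0∞) * P (En n) ≤
      ENNReal.ofReal K * P (En n) +
        ENNReal.ofReal K * ∑' j : ℕ, ((j : ℝ≥0∞) + 2) *
          (if ((j:ℝ) + 1) * K ≤ (n:ℝ) then P (En n) else 0) := by
    intro n
    by_cases hn : (n:ℝ) ≤ K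
    · have h1 : (n : ℝ≥0∞) ≤ ENNReal.ofReal K := by
        rw [← ENNReal.ofReal_natCast n]
        exact ENNReal.ofReal_le_ofReal hn
      exact le_trans (mul_le_mul_left h1 _) le_self_add
    · push_neg at hn
      set Pr : ℕ → Prop := fun j => ((j:ℝ) + 1) * K ≤ (n:ℝ) with hPr
      have hPr0 : Pr 0 := by simp only [hPr]; push_cast; linarith
      set j₀ : ℕ := Nat.findGreatest Pr n with hj₀
      have hj₀P : Pr j₀ := Nat.findGreatest_spec (Nat.zero_le n) hPr0
      have hj₀lt : j₀ + 1 ≤ n := by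
        by_contra h
        push_neg at h
        have hge : (n:ℝ) ≤ (j₀:ℝ) := by exact_mod_cast Nat.lt_succ_iff.mp h
        have : ((j₀:ℝ) + 1) * K ≤ (n:ℝ) := hj₀P
        nlinarith [hK]
      have hmax : ¬ Pr (j₀ + 1) :=
        Nat.findGreatest_is_greatest (Nat.lt_succ_self j₀) hj₀lt
      have hnlt : (n:ℝ) < ((j₀:ℝ) + 2) * K := by
        by_contra h
        push_neg at h
        exact hmax (by simp only [hPr]; push_cast; linarith)
      have hcoef : (n : ℝ≥0∞) ≤ ENNReal.ofReal K * ((j₀ : ℝ≥0∞) + 2) := by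
        rw [← ENNReal.ofReal_natCast n]
        calc ENNReal.ofReal (n:ℝ) ≤ ENNReal.ofReal (((j₀:ℝ) + 2) * K) :=
              ENNReal.ofReal_le_ofReal hnlt.le
          _ = ENNReal.ofReal K * ENNReal.ofReal ((j₀:ℝ) + 2) := by
              rw [← ENNReal.ofReal_mul (by positivity), mul_comm]
          _ = ENNReal.ofReal K * ((j₀ : ℝ≥0∞) + 2) := by
              rw [ENNReal.ofReal_add (by positivity) (by norm_num),
                ENNReal.ofReal_natCast, ENNReal.ofReal_ofNat]
      calc (n : ℝ≥0∞) * P (En n) ≤ (ENNReal.ofReal K * ((j₀ : ℝ≥0∞) + 2)) * P (En n) :=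
            mul_le_mul_left hcoef _
        _ = ENNReal.ofReal K * (((j₀ : ℝ≥0∞) + 2) *
              (if ((j₀:ℝ) + 1) * K ≤ (n:ℝ) then P (En n) else 0)) := by
            rw [if_pos hj₀P, mul_assoc]
        _ ≤ ENNReal.ofReal K * ∑' j : ℕ, ((j : ℝ≥0∞) + 2) *
              (if ((j:ℝ) + 1) * K ≤ (n:ℝ) then P (En n) else 0) :=
            mul_le_mul_right (ENNReal.le_tsum j₀) _
        _ ≤ _ := le_add_self
  -- sum the pointwise bounds
  have key2 : ∑' n : ℕ, (n : ℝ≥0∞) * P (En n) ≤ ENNReal.ofReal (K * (1 + S)) := by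
    calc ∑' n : ℕ, (n : ℝ≥0∞) * P (En n)
        ≤ ∑' n : ℕ, (ENNReal.ofReal K * P (En n) +
            ENNReal.ofReal K * ∑' j : ℕ, ((j : ℝ≥0∞) + 2) *
              (if ((j:ℝ) + 1) * K ≤ (n:ℝ) then P (En n) else 0)) :=
          ENNReal.tsum_le_tsum claim1
      _ = ENNReal.ofReal K * ∑' n : ℕ, P (En n) +
            ENNReal.ofReal K * ∑' n : ℕ, ∑' j : ℕ, ((j : ℝ≥0∞) + 2) *
              (if ((j:ℝ) + 1) * K ≤ (n:ℝ) then P (En n) else 0) := by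
          rw [ENNReal.tsum_add, ENNReal.tsum_mul_left, ENNReal.tsum_mul_left]
      _ = ENNReal.ofReal K +
            ENNReal.ofReal K * ∑' j : ℕ, ((j : ℝ≥0∞) + 2) *
              P {a | ((j:ℝ) + 1) * K ≤ (N a : ℝ)} := by
          have hswap : (∑' n : ℕ, ∑' j : ℕ, ((j : ℝ≥0∞) + 2) *
              (if ((j:ℝ) + 1) * K ≤ (n:ℝ) then P (En n) else 0)) =
              ∑' j : ℕ, ((j : ℝ≥0∞) + 2) * P {a | ((j:ℝ) + 1) * K ≤ (N a : ℝ)} := by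
            rw [ENNReal.tsum_comm]
            refine tsum_congr fun j => ?_
            rw [ENNReal.tsum_mul_left, hmeasPart (((j:ℝ) + 1) * K)]
          rw [hsum1, mul_one, hswap]
      _ ≤ ENNReal.ofReal K +
            ENNReal.ofReal K * ∑' j : ℕ, ((j : ℝ≥0∞) + 2) *
              ENNReal.ofReal (C * Real.exp (-c * ((j:ℝ) + 1))) := by
          gcongr with j
          exact htail' j
      _ = ENNReal.ofReal K + ENNReal.ofReal K * ENNReal.ofReal S := by
          congr 1
          congr 1
          rw [hS, ENNReal.ofReal_tsum_of_nonneg hterm_nn hsummable]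
          refine tsum_congr fun j => ?_
          conv_rhs => rw [ENNReal.ofReal_mul (show (0:ℝ) ≤ (j:ℝ) + 2 by positivity)]
          congr 1
          rw [ENNReal.ofReal_add (by positivity) (by norm_num),
            ENNReal.ofReal_natCast, ENNReal.ofReal_ofNat]
      _ = ENNReal.ofReal (K * (1 + S)) := by
          rw [ENNReal.ofReal_mul (by linarith), ENNReal.ofReal_add (by norm_num) hSnn,
            ENNReal.ofReal_one, mul_add, mul_one]
  -- assemble
  have hdecomp : ∫⁻ a, ENNReal.ofReal (T a ^ ε) ∂P =
      ∑' n : ℕ, ∫⁻ a in En n, ENNReal.ofReal (T a ^ ε) ∂P := by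
    rw [← lintegral_iUnion hEnm hEnd, hU, Measure.restrict_univ]
  calc ∫⁻ a, ENNReal.ofReal (T a ^ ε) ∂P
      = ∑' n : ℕ, ∫⁻ a in En n, ENNReal.ofReal (T a ^ ε) ∂P := hdecomp
    _ ≤ ∑' n : ℕ, P (En n) * ((n : ℝ≥0∞) * ENNReal.ofReal Et) := ENNReal.tsum_le_tsum key
    _ = (∑' n : ℕ, (n : ℝ≥0∞) * P (En n)) * ENNReal.ofReal Et := by
        rw [← ENNReal.tsum_mul_right]
        refine tsum_congr fun n => ?_
        ring
    _ ≤ ENNReal.ofReal (K * (1 + S)) * ENNReal.ofReal Et :=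
        mul_le_mul_left key2 _
    _ = ENNReal.ofReal (K * Et * (1 + S)) := by
        rw [← ENNReal.ofReal_mul (by positivity)]
        congr 1
        ring
end
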